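/- Let R(x) = e^{−f(x)} be a probability density on ℝ^d with f 1-strongly convex, L-smooth, and global minimum at 0. Then for all α ≥ 1, the α-Rényi divergence satisfies D_α(N(0, (1/L)I_d) ‖ R) ≤ (d/2) ln L. -/

import Mathlib

open MeasureTheory Real

/-- The α-Rényi divergence between two probability densities on `ℝ^d`. -/
noncomputable def renyiDiv {d : ℕ} (α : ℝ) (μ ν : EuclideanSpace ℝ (Fin d) → ℝ) : ℝ :=
  (α - 1)⁻¹ * Real.log (∫ x, μ x ^ α * ν x ^ (1 - α))

/-- Density of the isotropic Gaussian `N(m, σ²I_d)` on `ℝ^d`. -/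
noncomputable def gaussDensity {d : ℕ} (σ2 : ℝ) (m : EuclideanSpace ℝ (Fin d)) :
    EuclideanSpace ℝ (Fin d) → ℝ :=
  fun x => (2 * π * σ2) ^ (-(d : ℝ) / 2) * Real.exp (-‖x - m‖ ^ 2 / (2 * σ2))

private lemma gauss_integrable' {d : ℕ} {b : ℝ} (hb : 0 < b) :
    Integrable (fun x : EuclideanSpace ℝ (Fin d) => rexp (-b * ‖x‖ ^ 2)) := by
  have h := (GaussianFourier.integrable_cexp_neg_mul_sq_norm_add (b := (b : ℂ))
    (by simpa using hb) 0 (0 : EuclideanSpace ℝ (Fin d))).norm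
  refine h.congr (Filter.Eventually.of_forall fun v => ?_)
  simp [Complex.norm_exp]
  left
  norm_cast

private lemma gauss_integral' {d : ℕ} {b : ℝ} (hb : 0 < b) :
    ∫ x : EuclideanSpace ℝ (Fin d), rexp (-b * ‖x‖ ^ 2) = (π / b) ^ ((d : ℝ) / 2) := by
  rw [GaussianFourier.integral_rexp_neg_mul_sq_norm hb, finrank_euclideanSpace_fin]

private lemma taylor_bounds' {d : ℕ} (L : ℝ) (f : EuclideanSpace ℝ (Fin d) → ℝ)
    (hf : ContDiff ℝ 2 f)
    (hconv : ∀ x v : EuclideanSpace ℝ (Fin d),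
      ‖v‖ ^ 2 ≤ (inner ℝ (fderiv ℝ (gradient f) x v) v : ℝ))
    (hsmooth : ∀ x v : EuclideanSpace ℝ (Fin d),
      (inner ℝ (fderiv ℝ (gradient f) x v) v : ℝ) ≤ L * ‖v‖ ^ 2)
    (hmin : gradient f 0 = 0) (x : EuclideanSpace ℝ (Fin d)) :
    f 0 + ‖x‖ ^ 2 / 2 ≤ f x ∧ f x ≤ f 0 + L * ‖x‖ ^ 2 / 2 := by
  have hfd : Differentiable ℝ f := hf.differentiable (by norm_num)
  have hg : Differentiable ℝ (gradient f) := by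
    have h1 : ContDiff ℝ 1 (fderiv ℝ f) := hf.fderiv_right (by norm_num)
    exact fun y => (((InnerProductSpace.toDual ℝ
      (EuclideanSpace ℝ (Fin d))).symm.contDiff (n := 1)).differentiable one_ne_zero _).comp y
      ((h1.differentiable one_ne_zero) y)
  set φ : ℝ → ℝ := fun t => f (t • x) with hφdef
  set ψ : ℝ → ℝ := fun t => (innerSL ℝ x) (gradient f (t • x)) with hψdef
  have hline : ∀ t : ℝ, HasDerivAt (fun s : ℝ => s • x) x t := fun t => by
    simpa using (hasDerivAt_id t).smul_const x
  have hφ' : ∀ t, HasDerivAt φ (ψ t) t := by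
    intro t
    have h := ((hfd (t • x)).hasFDerivAt).comp_hasDerivAt t (hline t)
    refine h.congr_deriv (Eq.symm ?_)
    simp only [hψdef, innerSL_apply_apply]
    rw [real_inner_comm]
    exact InnerProductSpace.toDual_symm_apply
  have hψ' : ∀ t, HasDerivAt ψ ((inner ℝ (fderiv ℝ (gradient f) (t • x) x) x : ℝ)) t := by
    intro t
    have h1 := ((hg (t • x)).hasFDerivAt).comp_hasDerivAt t (hline t)
    have h2 := ((innerSL ℝ x).hasFDerivAt).comp_hasDerivAt t h1
    refine h2.congr_deriv (Eq.symm ?_)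
    rw [innerSL_apply_apply]
    exact real_inner_comm _ _
  have hψ0 : ψ 0 = 0 := by simp only [hψdef, zero_smul, hmin, map_zero]
  have hub1 : ∀ t : ℝ, 0 ≤ t → ψ t ≤ L * ‖x‖ ^ 2 * t := by
    intro t ht
    have hu : ∀ s : ℝ, HasDerivAt (fun r => L * ‖x‖ ^ 2 * r - ψ r)
        (L * ‖x‖ ^ 2 - inner ℝ (fderiv ℝ (gradient f) (s • x) x) x) s := by
      intro s
      have := ((hasDerivAt_id s).const_mul (L * ‖x‖ ^ 2)).sub (hψ' s)
      exact this.congr_deriv (by simp)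
    have mono : Monotone (fun r => L * ‖x‖ ^ 2 * r - ψ r) :=
      monotone_of_deriv_nonneg (fun s => (hu s).differentiableAt) (fun s => by
        rw [(hu s).deriv]; have := hsmooth (s • x) x; linarith)
    have h := mono ht
    simp only [mul_zero, hψ0, sub_zero] at h
    linarith
  have hlb1 : ∀ t : ℝ, 0 ≤ t → ‖x‖ ^ 2 * t ≤ ψ t := by
    intro t ht
    have hu : ∀ s : ℝ, HasDerivAt (fun r => ψ r - ‖x‖ ^ 2 * r)
        (inner ℝ (fderiv ℝ (gradient f) (s • x) x) x - ‖x‖ ^ 2) s := by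
      intro s
      have := (hψ' s).sub ((hasDerivAt_id s).const_mul (‖x‖ ^ 2))
      exact this.congr_deriv (by simp)
    have mono : Monotone (fun r => ψ r - ‖x‖ ^ 2 * r) :=
      monotone_of_deriv_nonneg (fun s => (hu s).differentiableAt) (fun s => by
        rw [(hu s).deriv]; have := hconv (s • x) x; linarith)
    have h := mono ht
    simp only [mul_zero, hψ0, zero_sub, sub_zero] at h
    linarith
  constructor
  · have hw : ∀ s : ℝ, HasDerivAt (fun r => φ r - ‖x‖ ^ 2 / 2 * r ^ 2) (ψ s - ‖x‖ ^ 2 * s) s := by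
      intro s
      have h1 : HasDerivAt (fun r : ℝ => r ^ 2) (2 * s) s := by
        simpa using hasDerivAt_pow 2 s
      have := (hφ' s).sub (h1.const_mul (‖x‖ ^ 2 / 2))
      exact this.congr_deriv (by ring)
    have mono : MonotoneOn (fun r => φ r - ‖x‖ ^ 2 / 2 * r ^ 2) (Set.Ici 0) := by
      apply monotoneOn_of_deriv_nonneg (convex_Ici 0)
      · exact (Differentiable.continuous fun s => (hw s).differentiableAt).continuousOn
      · exact fun s _ => ((hw s).differentiableAt).differentiableWithinAt
      · intro s hs
        rw [interior_Ici] at hs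
        rw [(hw s).deriv]
        have := hlb1 s (le_of_lt hs)
        linarith
    have h := mono Set.self_mem_Ici (by norm_num : (1:ℝ) ∈ Set.Ici 0) zero_le_one
    simp only [hφdef, zero_smul, one_smul, one_pow, mul_one, ne_eq, OfNat.ofNat_ne_zero,
      not_false_eq_true, zero_pow, mul_zero, sub_zero] at h
    linarith
  · have hw : ∀ s : ℝ, HasDerivAt (fun r => L * ‖x‖ ^ 2 / 2 * r ^ 2 - φ r)
        (L * ‖x‖ ^ 2 * s - ψ s) s := by
      intro s
      have h1 : HasDerivAt (fun r : ℝ => r ^ 2) (2 * s) s := by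
        simpa using hasDerivAt_pow 2 s
      have := (h1.const_mul (L * ‖x‖ ^ 2 / 2)).sub (hφ' s)
      exact this.congr_deriv (by ring)
    have mono : MonotoneOn (fun r => L * ‖x‖ ^ 2 / 2 * r ^ 2 - φ r) (Set.Ici 0) := by
      apply monotoneOn_of_deriv_nonneg (convex_Ici 0)
      · exact (Differentiable.continuous fun s => (hw s).differentiableAt).continuousOn
      · exact fun s _ => ((hw s).differentiableAt).differentiableWithinAt
      · intro s hs
        rw [interior_Ici] at hs
        rw [(hw s).deriv]
        have := hub1 s (le_of_lt hs)
        linarith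
    have h := mono Set.self_mem_Ici (by norm_num : (1:ℝ) ∈ Set.Ici 0) zero_le_one
    simp only [hφdef, zero_smul, one_smul, one_pow, mul_one, ne_eq, OfNat.ofNat_ne_zero,
      not_false_eq_true, zero_pow, mul_zero, zero_sub, sub_zero] at h
    linarith

/-- If `R = e^{-f}` is a probability density with `f` 1-strongly convex, `L`-smooth
(`I ⪯ ∇²f ⪯ LI`), with global minimum at `0`, then for all `α ≥ 1`,
`D_α(N(0, (1/L)I_d) ‖ R) ≤ (d/2) ln L`. -/
theorem renyiDiv_gaussian_init_le {d : ℕ} (L : ℝ) (f : EuclideanSpace ℝ (Fin d) → ℝ)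
    (hf : ContDiff ℝ 2 f)
    (hconv : ∀ x v : EuclideanSpace ℝ (Fin d),
      ‖v‖ ^ 2 ≤ (inner ℝ (fderiv ℝ (gradient f) x v) v : ℝ))
    (hsmooth : ∀ x v : EuclideanSpace ℝ (Fin d),
      (inner ℝ (fderiv ℝ (gradient f) x v) v : ℝ) ≤ L * ‖v‖ ^ 2)
    (hmin : gradient f 0 = 0)
    (hprob : ∫ x, Real.exp (-f x) = 1)
    (α : ℝ) (hα : 1 ≤ α) :
    renyiDiv α (gaussDensity (1 / L) (0 : EuclideanSpace ℝ (Fin d)))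
        (fun x => Real.exp (-f x)) ≤ (d : ℝ) / 2 * Real.log L := by
  rcases Nat.eq_zero_or_pos d with hd | hd
  · -- d = 0 : the space is a point
    subst hd
    have huniv : (volume : Measure (EuclideanSpace ℝ (Fin 0))) Set.univ = 1 := by
      have e := (EuclideanSpace.volume_preserving_symm_measurableEquiv_toLp (Fin 0))
      have h1 : (volume : Measure (Fin 0 → ℝ)) Set.univ = 1 := by
        rw [MeasureTheory.volume_pi, Measure.pi_univ]; simp
      exact (e.measure_preimage MeasurableSet.univ.nullMeasurableSet).trans h1
    have hx0 : ∀ x : EuclideanSpace ℝ (Fin 0), x = 0 := fun x => Subsingleton.elim x 0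
    have hf0 : rexp (-f 0) = 1 := by
      have h : (fun x : EuclideanSpace ℝ (Fin 0) => rexp (-f x)) = fun _ => rexp (-f 0) :=
        funext fun x => by rw [hx0 x]
      rw [h, integral_const, measureReal_def, huniv] at hprob
      simpa using hprob
    have hμ : ∀ x : EuclideanSpace ℝ (Fin 0), gaussDensity (1 / L) 0 x = 1 := by
      intro x
      rw [hx0 x]
      unfold gaussDensity
      norm_num
    have h : (fun x : EuclideanSpace ℝ (Fin 0) =>
        gaussDensity (1 / L) 0 x ^ α * rexp (-f x) ^ (1 - α)) = fun _ => 1 := by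
      funext x
      rw [hμ x, hx0 x, hf0]
      simp
    unfold renyiDiv
    rw [h, integral_const, measureReal_def, huniv]
    simp
  · -- d ≥ 1
    have hL1 : 1 ≤ L := by
      have hn : ‖EuclideanSpace.single (⟨0, hd⟩ : Fin d) (1:ℝ)‖ = 1 := by
        rw [EuclideanSpace.norm_single]; norm_num
      have h1 := hconv 0 (EuclideanSpace.single ⟨0, hd⟩ 1)
      have h2 := hsmooth 0 (EuclideanSpace.single ⟨0, hd⟩ 1)
      rw [hn] at h1 h2
      norm_num at h1 h2
      linarith
    have hL0 : (0:ℝ) < L := lt_of_lt_of_le zero_lt_one hL1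
    have htay := taylor_bounds' L f hf hconv hsmooth hmin
    have hint_f : Integrable (fun x : EuclideanSpace ℝ (Fin d) => rexp (-f x)) := by
      by_contra h
      rw [integral_undef h] at hprob
      norm_num at hprob
    have h2π : (0:ℝ) < 2 * π := by positivity
    have hf0 : f 0 ≤ (d:ℝ)/2 * Real.log (2*π) := by
      have hle : ∫ x : EuclideanSpace ℝ (Fin d), rexp (-f x)
          ≤ ∫ x : EuclideanSpace ℝ (Fin d), rexp (-f 0) * rexp (-(1/2 : ℝ) * ‖x‖^2) := by
        refine integral_mono hint_f ((gauss_integrable' one_half_pos).const_mul _) fun x => ?_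
        rw [← Real.exp_add]
        apply Real.exp_le_exp.2
        have := (htay x).1
        linarith
      rw [hprob, integral_const_mul, gauss_integral' one_half_pos] at hle
      have h1 : π / (1/2 : ℝ) = 2 * π := by ring
      rw [h1] at hle
      have hlog := Real.log_le_log (by norm_num) hle
      rw [Real.log_one, Real.log_mul (Real.exp_ne_zero _) (by positivity), Real.log_exp,
        Real.log_rpow h2π] at hlog
      linarith
    have hπL : (0:ℝ) < 2 * π / L := by positivity
    have hμeq : ∀ x : EuclideanSpace ℝ (Fin d), gaussDensity (1/L) (0 : EuclideanSpace ℝ (Fin d)) x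
        = (2*π/L) ^ (-(d:ℝ)/2) * rexp (-(L/2) * ‖x‖^2) := by
      intro x
      unfold gaussDensity
      rw [sub_zero]
      have h1 : 2 * π * (1/L) = 2*π/L := by ring
      have h2 : -‖x‖^2 / (2 * (1/L)) = -(L/2) * ‖x‖^2 := by
        field_simp
      rw [h1, h2]
    have hμpos : ∀ x : EuclideanSpace ℝ (Fin d),
        0 < gaussDensity (1/L) (0 : EuclideanSpace ℝ (Fin d)) x := fun x => by
      rw [hμeq x]; positivity
    have hμint : Integrable (gaussDensity (1/L) (0 : EuclideanSpace ℝ (Fin d))) := by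
      have h := (gauss_integrable' (d := d) (b := L/2) (by positivity)).const_mul
        ((2*π/L) ^ (-(d:ℝ)/2))
      exact h.congr (Filter.Eventually.of_forall fun x => (hμeq x).symm)
    have hμ1 : ∫ x, gaussDensity (1/L) (0 : EuclideanSpace ℝ (Fin d)) x = 1 := by
      rw [show (fun x => gaussDensity (1/L) (0 : EuclideanSpace ℝ (Fin d)) x)
        = fun x : EuclideanSpace ℝ (Fin d) => (2*π/L) ^ (-(d:ℝ)/2) * rexp (-(L/2) * ‖x‖^2)
        from funext hμeq]
      rw [integral_const_mul, gauss_integral' (by positivity : (0:ℝ) < L/2)]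
      have h1 : π / (L/2) = 2*π/L := by
        field_simp
      rw [h1, ← Real.rpow_add hπL, show -(d:ℝ)/2 + (d:ℝ)/2 = 0 by ring, Real.rpow_zero]
    set c : ℝ := rexp (-f 0) * (2*π/L) ^ ((d:ℝ)/2) with hc
    have hc_pos : 0 < c := by rw [hc]; positivity
    have hcμ : ∀ x : EuclideanSpace ℝ (Fin d),
        c * gaussDensity (1/L) (0 : EuclideanSpace ℝ (Fin d)) x ≤ rexp (-f x) := by
      intro x
      have hKK : (2*π/L) ^ ((d:ℝ)/2) * (2*π/L) ^ (-(d:ℝ)/2) = 1 := by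
        rw [← Real.rpow_add hπL, show (d:ℝ)/2 + -(d:ℝ)/2 = 0 by ring, Real.rpow_zero]
      have heq : c * gaussDensity (1/L) (0 : EuclideanSpace ℝ (Fin d)) x
          = rexp (-f 0) * rexp (-(L/2) * ‖x‖^2) := by
        rw [hμeq x, hc]
        calc rexp (-f 0) * (2*π/L) ^ ((d:ℝ)/2) * ((2*π/L) ^ (-(d:ℝ)/2) * rexp (-(L/2) * ‖x‖^2))
            = rexp (-f 0) * rexp (-(L/2) * ‖x‖^2)
              * ((2*π/L) ^ ((d:ℝ)/2) * (2*π/L) ^ (-(d:ℝ)/2)) := by ring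
          _ = _ := by rw [hKK]; ring
      rw [heq, ← Real.exp_add]
      apply Real.exp_le_exp.2
      have := (htay x).2
      linarith
    have hc1 : c ≤ 1 := by
      have hle := integral_mono (hμint.const_mul c) hint_f hcμ
      rwa [integral_const_mul, hμ1, mul_one, hprob] at hle
    rcases eq_or_lt_of_le hα with hα1 | hα1
    · unfold renyiDiv
      rw [← hα1]
      simp only [sub_self, inv_zero, zero_mul]
      exact mul_nonneg (by positivity) (Real.log_nonneg hL1)
    · have hexp : 1 - α ≤ 0 := by linarith
      have hpt : ∀ x : EuclideanSpace ℝ (Fin d),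
          gaussDensity (1/L) (0 : EuclideanSpace ℝ (Fin d)) x ^ α * rexp (-f x) ^ (1-α)
          ≤ c ^ (1-α) * gaussDensity (1/L) (0 : EuclideanSpace ℝ (Fin d)) x := by
        intro x
        have hbase : 0 < c * gaussDensity (1/L) (0 : EuclideanSpace ℝ (Fin d)) x :=
          mul_pos hc_pos (hμpos x)
        have h1 : rexp (-f x) ^ (1-α)
            ≤ (c * gaussDensity (1/L) (0 : EuclideanSpace ℝ (Fin d)) x) ^ (1-α) :=
          Real.rpow_le_rpow_of_nonpos hbase (hcμ x) hexp
        have h2 : gaussDensity (1/L) (0 : EuclideanSpace ℝ (Fin d)) x ^ α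
              * (c * gaussDensity (1/L) (0 : EuclideanSpace ℝ (Fin d)) x) ^ (1-α)
            = c ^ (1-α) * gaussDensity (1/L) (0 : EuclideanSpace ℝ (Fin d)) x := by
          rw [Real.mul_rpow hc_pos.le (hμpos x).le]
          rw [show gaussDensity (1/L) (0 : EuclideanSpace ℝ (Fin d)) x ^ α
              * (c ^ (1-α) * gaussDensity (1/L) (0 : EuclideanSpace ℝ (Fin d)) x ^ (1-α))
              = c ^ (1-α) * (gaussDensity (1/L) (0 : EuclideanSpace ℝ (Fin d)) x ^ α
                * gaussDensity (1/L) (0 : EuclideanSpace ℝ (Fin d)) x ^ (1-α)) from by ring]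
          rw [← Real.rpow_add (hμpos x), add_sub_cancel, Real.rpow_one]
        calc gaussDensity (1/L) (0 : EuclideanSpace ℝ (Fin d)) x ^ α * rexp (-f x) ^ (1-α)
            ≤ gaussDensity (1/L) (0 : EuclideanSpace ℝ (Fin d)) x ^ α
              * (c * gaussDensity (1/L) (0 : EuclideanSpace ℝ (Fin d)) x) ^ (1-α) :=
              mul_le_mul_of_nonneg_left h1 (Real.rpow_nonneg (hμpos x).le α)
          _ = _ := h2
      have hcontμ : Continuous (gaussDensity (1/L) (0 : EuclideanSpace ℝ (Fin d))) := by
        unfold gaussDensity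
        exact continuous_const.mul (Real.continuous_exp.comp
          (((continuous_id.sub continuous_const).norm.pow 2).neg.div_const _))
      have hcont : Continuous (fun x : EuclideanSpace ℝ (Fin d) =>
          gaussDensity (1/L) (0 : EuclideanSpace ℝ (Fin d)) x ^ α * rexp (-f x) ^ (1-α)) := by
        apply Continuous.mul
        · exact hcontμ.rpow_const fun x => Or.inl (hμpos x).ne'
        · exact (Real.continuous_exp.comp (hf.continuous.neg)).rpow_const
            fun x => Or.inl (Real.exp_ne_zero _)
      have hint2 : Integrable (fun x : EuclideanSpace ℝ (Fin d) =>
          gaussDensity (1/L) (0 : EuclideanSpace ℝ (Fin d)) x ^ α * rexp (-f x) ^ (1-α)) := by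
        refine Integrable.mono' (hμint.const_mul (c ^ (1-α))) hcont.aestronglyMeasurable
          (Filter.Eventually.of_forall fun x => ?_)
        rw [Real.norm_eq_abs, abs_of_nonneg (mul_nonneg (Real.rpow_nonneg (hμpos x).le _)
          (Real.rpow_nonneg (Real.exp_nonneg _) _))]
        exact hpt x
      have hIle : ∫ x : EuclideanSpace ℝ (Fin d),
          gaussDensity (1/L) (0 : EuclideanSpace ℝ (Fin d)) x ^ α * rexp (-f x) ^ (1-α)
          ≤ c ^ (1-α) := by
        have h := integral_mono hint2 (hμint.const_mul _) hpt
        rwa [integral_const_mul, hμ1, mul_one] at h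
      have hInn : 0 ≤ ∫ x : EuclideanSpace ℝ (Fin d),
          gaussDensity (1/L) (0 : EuclideanSpace ℝ (Fin d)) x ^ α * rexp (-f x) ^ (1-α) :=
        integral_nonneg fun x => mul_nonneg (Real.rpow_nonneg (hμpos x).le _)
          (Real.rpow_nonneg (Real.exp_nonneg _) _)
      have hlogc : Real.log c ≤ 0 := Real.log_nonpos hc_pos.le hc1
      have hlog : Real.log (∫ x : EuclideanSpace ℝ (Fin d),
          gaussDensity (1/L) (0 : EuclideanSpace ℝ (Fin d)) x ^ α * rexp (-f x) ^ (1-α))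
          ≤ (1-α) * Real.log c := by
        rcases lt_or_eq_of_le hInn with hpos | h0
        · calc Real.log (∫ x : EuclideanSpace ℝ (Fin d),
              gaussDensity (1/L) (0 : EuclideanSpace ℝ (Fin d)) x ^ α * rexp (-f x) ^ (1-α))
              ≤ Real.log (c ^ (1-α)) := Real.log_le_log hpos hIle
            _ = (1-α) * Real.log c := Real.log_rpow hc_pos _
        · rw [← h0, Real.log_zero]
          nlinarith
      unfold renyiDiv
      have hα0 : (0:ℝ) < α - 1 := by linarith
      have step : (α-1)⁻¹ * Real.log (∫ x : EuclideanSpace ℝ (Fin d),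
          gaussDensity (1/L) (0 : EuclideanSpace ℝ (Fin d)) x ^ α * rexp (-f x) ^ (1-α))
          ≤ - Real.log c := by
        have h := mul_le_mul_of_nonneg_left hlog (inv_nonneg.2 hα0.le)
        refine h.trans_eq ?_
        field_simp
        ring
      refine le_trans (by exact step) ?_
      rw [hc, Real.log_mul (Real.exp_ne_zero _) (by positivity), Real.log_exp,
        Real.log_rpow hπL, Real.log_div (by positivity) (ne_of_gt hL0)]
      nlinarith [hf0]
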